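/- Let m: P¹ → P¹ be the toric Frobenius morphism of degree m (z ↦ z^m) and 0 ≤ a < m an integer. Then m_*O_{P¹}(a) ≅ O_{P¹}^{⊕(a+1)} ⊕ O_{P¹}(−1)^{⊕(m−a−1)}. -/

import Mathlib

/-- The space of degree-`n` forms on `P¹` (sections of `O(n)`), for `n : ℤ`
(zero in negative degrees): the homogeneous part of degree `n` of `ℚ[s,t]`. -/
noncomputable def P1deg (n : ℤ) : Submodule ℚ (MvPolynomial (Fin 2) ℚ) :=
  if 0 ≤ n then MvPolynomial.homogeneousSubmodule (Fin 2) ℚ n.toNat else ⊥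

/-- The homogeneous coordinate ring map of the toric Frobenius morphism
`P¹ → P¹`, `[s : t] ↦ [sᵐ : tᵐ]` (i.e. `z ↦ zᵐ` on the torus). -/
noncomputable def frobP1 (m : ℕ) :
    MvPolynomial (Fin 2) ℚ →ₐ[ℚ] MvPolynomial (Fin 2) ℚ :=
  MvPolynomial.aeval (fun i : Fin 2 => MvPolynomial.X i ^ m)

open MvPolynomial

namespace ThomsenP1

noncomputable def mdiv (m : ℕ) (n : Fin 2 →₀ ℕ) : Fin 2 →₀ ℕ :=
  Finsupp.mapRange (· / m) (Nat.zero_div m) n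

@[simp] lemma mdiv_apply (m : ℕ) (n : Fin 2 →₀ ℕ) (i : Fin 2) :
    mdiv m n i = n i / m := rfl

lemma deg2 (n : Fin 2 →₀ ℕ) : n.degree = n 0 + n 1 := by
  rw [Finsupp.degree_apply, Finset.sum_subset (Finset.subset_univ _)
    (fun x _ hx => Finsupp.notMem_support_iff.mp hx), Fin.sum_univ_two]

noncomputable def D (m r : ℕ) : MvPolynomial (Fin 2) ℚ →ₗ[ℚ] MvPolynomial (Fin 2) ℚ :=
  (MvPolynomial.basisMonomials (Fin 2) ℚ).constr ℚ
    (fun n => if n 0 % m = r then MvPolynomial.monomial (mdiv m n) 1 else 0)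

lemma D_monomial (m r : ℕ) (n : Fin 2 →₀ ℕ) (c : ℚ) :
    D m r (monomial n c) = if n 0 % m = r then monomial (mdiv m n) c else 0 := by
  have h1 : monomial n c = c • monomial n (1:ℚ) := by rw [smul_monomial, smul_eq_mul, mul_one]
  have h2 : (monomial n (1:ℚ)) = (MvPolynomial.basisMonomials (Fin 2) ℚ) n := by
    rw [coe_basisMonomials]
  rw [h1, map_smul, h2, D, Module.Basis.constr_basis]
  split_ifs
  · rw [smul_monomial, smul_eq_mul, mul_one]
  · rw [smul_zero]

lemma frob_monomial (m : ℕ) (n : Fin 2 →₀ ℕ) (c : ℚ) :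
    frobP1 m (monomial n c) = monomial (m • n) c := by
  rw [frobP1, aeval_monomial, monomial_eq (s := m • n)]
  congr 1
  rw [Finsupp.prod_of_support_subset (m • n) (Finsupp.support_smul) _
    (fun i _ => pow_zero _), Finsupp.prod]
  refine Finset.prod_congr rfl (fun i _ => ?_)
  rw [Finsupp.smul_apply, smul_eq_mul, pow_mul]

/-- exponent of `t` in the multiplier monomial for residue `r` -/
def sexp (m a r : ℕ) : ℕ := if r ≤ a then a - r else m + a - r

noncomputable def cexp (m a r : ℕ) : Fin 2 →₀ ℕ :=
  Finsupp.single 0 r + Finsupp.single 1 (sexp m a r)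

@[simp] lemma cexp_zero (m a r : ℕ) : cexp m a r 0 = r := by
  simp [cexp, Finsupp.single_apply]

@[simp] lemma cexp_one (m a r : ℕ) : cexp m a r 1 = sexp m a r := by
  simp [cexp, Finsupp.single_apply]

lemma sexp_lt (m a r : ℕ) (ha : a < m) (hr : r < m) : sexp m a r < m := by
  unfold sexp; split_ifs <;> omega

/-- the inclusion of the residue-`r` summand -/
noncomputable def U (m a r : ℕ) : MvPolynomial (Fin 2) ℚ →ₗ[ℚ] MvPolynomial (Fin 2) ℚ :=
  (LinearMap.mulLeft ℚ (MvPolynomial.monomial (cexp m a r) (1:ℚ))).comp (frobP1 m).toLinearMap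

lemma U_monomial (m a r : ℕ) (n : Fin 2 →₀ ℕ) (c : ℚ) :
    U m a r (monomial n c) = monomial (cexp m a r + m • n) c := by
  simp only [U, LinearMap.comp_apply, AlgHom.toLinearMap_apply, frob_monomial,
    LinearMap.mulLeft_apply, monomial_mul, one_mul]

lemma DU (m a r r' : ℕ) (hm : 0 < m) (ha : a < m) (hr : r < m) :
    (D m r').comp (U m a r) = if r' = r then LinearMap.id else 0 := by
  apply (MvPolynomial.basisMonomials (Fin 2) ℚ).ext
  intro n
  rw [coe_basisMonomials]
  simp only [LinearMap.comp_apply, U_monomial, D_monomial]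
  have h0 : (cexp m a r + m • n) 0 = r + m * n 0 := by
    simp [Finsupp.add_apply, Finsupp.smul_apply, mul_comm]
  rw [h0, Nat.add_mul_mod_self_left, Nat.mod_eq_of_lt hr]
  by_cases h : r' = r
  · subst h
    rw [if_pos rfl, if_pos rfl, LinearMap.id_apply]
    have hmd : mdiv m (cexp m a r' + m • n) = n := by
      apply Finsupp.ext; intro i
      fin_cases i
      · show (cexp m a r' + m • n) 0 / m = n 0
        rw [h0, Nat.add_mul_div_left _ _ hm, Nat.div_eq_of_lt hr, zero_add]
      · show (cexp m a r' + m • n) 1 / m = n 1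
        rw [Finsupp.add_apply, Finsupp.smul_apply, smul_eq_mul, cexp_one,
          Nat.add_mul_div_left _ _ hm, Nat.div_eq_of_lt (sexp_lt m a r' ha hr), zero_add]
    rw [hmd]
  · rw [if_neg (fun hh => h hh.symm), if_neg h, LinearMap.zero_apply]

lemma D_frob_mul (m r : ℕ) (hm : 0 < m) (f p : MvPolynomial (Fin 2) ℚ) :
    D m r (frobP1 m f * p) = f * D m r p := by
  induction f using MvPolynomial.induction_on' with
  | add f g hf hg => rw [map_add, add_mul, map_add, add_mul, hf, hg]
  | monomial u b =>
    induction p using MvPolynomial.induction_on' with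
    | add p q hp hq => rw [map_add, mul_add, map_add, mul_add, hp, hq]
    | monomial n c =>
      rw [frob_monomial, monomial_mul, D_monomial, D_monomial]
      have h0 : (m • u + n) 0 = m * u 0 + n 0 := by
        simp [Finsupp.add_apply, Finsupp.smul_apply]
      rw [h0, Nat.mul_add_mod]
      split_ifs
      · rw [monomial_mul]
        have hmd : mdiv m (m • u + n) = u + mdiv m n := by
          apply Finsupp.ext; intro i
          rw [mdiv_apply, Finsupp.add_apply, Finsupp.add_apply, Finsupp.smul_apply,
            smul_eq_mul, mdiv_apply, Nat.mul_add_div hm]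
        rw [hmd]
      · rw [mul_zero]

lemma key (m a : ℕ) (hm : 0 < m) (ha : a < m) {e n0 n1 : ℕ} (h : n0 + n1 = m * e + a) :
    n1 % m = sexp m a (n0 % m) ∧
      (if n0 % m ≤ a then n0 / m + n1 / m = e else n0 / m + n1 / m + 1 = e) := by
  have hd0 := Nat.div_add_mod n0 m
  have hd1 := Nat.div_add_mod n1 m
  have hr : n0 % m < m := Nat.mod_lt _ hm
  have hx : n1 % m < m := Nat.mod_lt _ hm
  set r := n0 % m with hrdef
  set x := n1 % m with hxdef
  set q0 := n0 / m with hq0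
  set q1 := n1 / m with hq1
  have heq : m * (q0 + q1) + (r + x) = m * e + a := by rw [Nat.mul_add]; omega
  have hmod : (r + x) % m = a := by
    have h1 : (m * (q0 + q1) + (r + x)) % m = (r + x) % m := Nat.mul_add_mod _ _ _
    have h2 : (m * e + a) % m = a := by rw [Nat.mul_add_mod, Nat.mod_eq_of_lt ha]
    rw [← h1, heq, h2]
  rcases Nat.lt_or_ge (r + x) m with h3 | h3
  · have hrx : r + x = a := by rw [← Nat.mod_eq_of_lt h3, hmod]
    have hqe : q0 + q1 = e := by
      have := heq
      rw [hrx] at this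
      exact Nat.eq_of_mul_eq_mul_left hm (Nat.add_right_cancel this)
    have hle : r ≤ a := by omega
    rw [if_pos hle]
    unfold sexp
    rw [if_pos hle]
    omega
  · have hrx : r + x = a + m := by
      have h4 : (r + x) % m = r + x - m := by
        rw [Nat.mod_eq_sub_mod h3, Nat.mod_eq_of_lt (by omega)]
      omega
    have hqe : q0 + q1 + 1 = e := by
      have h5 : m * (q0 + q1 + 1) + a = m * e + a := by rw [Nat.mul_add, Nat.mul_one]; omega
      exact Nat.eq_of_mul_eq_mul_left hm (Nat.add_right_cancel h5)
    have hgt : ¬ r ≤ a := by omega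
    rw [if_neg hgt]
    unfold sexp
    rw [if_neg hgt]
    omega

/-- induction helper: membership statements about linear images of homogeneous polys -/
lemma homog_induction {L : MvPolynomial (Fin 2) ℚ →ₗ[ℚ] MvPolynomial (Fin 2) ℚ} {N : ℕ}
    {p : Submodule ℚ (MvPolynomial (Fin 2) ℚ)}
    (hmono : ∀ n : Fin 2 →₀ ℕ, n 0 + n 1 = N → L (monomial n 1) ∈ p) :
    ∀ v ∈ homogeneousSubmodule (Fin 2) ℚ N, L v ∈ p := by
  intro v hv
  have hle : homogeneousSubmodule (Fin 2) ℚ N ≤ Submodule.comap L p := by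
    rw [homogeneousSubmodule_eq_finsupp_supported, AddMonoidAlgebra.supported_eq_span_single,
      Submodule.span_le]
    rintro x ⟨n, hn, rfl⟩
    simp only [Set.mem_setOf_eq] at hn
    have : (AddMonoidAlgebra.single n (1:ℚ)) = monomial n 1 := single_eq_monomial n 1
    simp only [Submodule.mem_comap, SetLike.mem_coe, this]
    exact hmono n (by rw [← deg2]; exact hn)
  exact hle hv

lemma homog_induction_eq {L : MvPolynomial (Fin 2) ℚ →ₗ[ℚ] MvPolynomial (Fin 2) ℚ} {N : ℕ}
    (hmono : ∀ n : Fin 2 →₀ ℕ, n 0 + n 1 = N → L (monomial n 1) = monomial n 1) :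
    ∀ v ∈ homogeneousSubmodule (Fin 2) ℚ N, L v = v := by
  intro v hv
  have := homog_induction (L := L - LinearMap.id) (N := N) (p := ⊥)
    (fun n hn => by
      simp only [LinearMap.sub_apply, LinearMap.id_apply, Submodule.mem_bot, sub_eq_zero]
      exact hmono n hn) v hv
  simp only [LinearMap.sub_apply, LinearMap.id_apply, Submodule.mem_bot, sub_eq_zero] at this
  exact this

lemma D_homog_le {m a r e : ℕ} (hm : 0 < m) (ha : a < m) (hr : r ≤ a) {v}
    (hv : v ∈ homogeneousSubmodule (Fin 2) ℚ (m * e + a)) :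
    D m r v ∈ homogeneousSubmodule (Fin 2) ℚ e := by
  refine homog_induction (fun n hn => ?_) v hv
  rw [D_monomial]
  split_ifs with h
  · rw [mem_homogeneousSubmodule]
    refine isHomogeneous_monomial _ ?_
    rw [deg2]
    have := (key m a hm ha hn).2
    rw [h, if_pos hr] at this
    simpa using this
  · exact zero_mem _

lemma D_homog_gt {m a r e : ℕ} (hm : 0 < m) (ha : a < m) (hr : a < r) {v}
    (hv : v ∈ homogeneousSubmodule (Fin 2) ℚ (m * (e + 1) + a)) :
    D m r v ∈ homogeneousSubmodule (Fin 2) ℚ e := by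
  refine homog_induction (fun n hn => ?_) v hv
  rw [D_monomial]
  split_ifs with h
  · rw [mem_homogeneousSubmodule]
    refine isHomogeneous_monomial _ ?_
    rw [deg2]
    have := (key m a hm ha hn).2
    rw [h, if_neg (by omega)] at this
    simpa using Nat.succ_injective (by simpa using this)
  · exact zero_mem _

lemma D_zero_gt {m a r : ℕ} (hm : 0 < m) (ha : a < m) (hr : a < r) {v}
    (hv : v ∈ homogeneousSubmodule (Fin 2) ℚ a) :
    D m r v = 0 := by
  have := homog_induction (L := D m r) (N := a) (p := ⊥)
    (fun n hn => by
      rw [D_monomial, if_neg, Submodule.mem_bot]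
      have : n 0 < m := by omega
      rw [Nat.mod_eq_of_lt this]
      omega) v hv
  simpa using this

lemma frob_homog {m e : ℕ} {v} (hv : v ∈ homogeneousSubmodule (Fin 2) ℚ e) :
    frobP1 m v ∈ homogeneousSubmodule (Fin 2) ℚ (m * e) := by
  refine homog_induction (L := (frobP1 m).toLinearMap) (fun n hn => ?_) v hv
  rw [AlgHom.toLinearMap_apply, frob_monomial, mem_homogeneousSubmodule]
  refine isHomogeneous_monomial _ ?_
  rw [deg2, Finsupp.smul_apply, Finsupp.smul_apply, smul_eq_mul, smul_eq_mul, ← Nat.mul_add, hn]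

lemma cexp_degree_le {m a r : ℕ} (hr : r ≤ a) : (cexp m a r).degree = a := by
  rw [deg2, cexp_zero, cexp_one]
  unfold sexp
  rw [if_pos hr]
  omega

lemma cexp_degree_gt {m a r : ℕ} (ha : a < m) (hra : a < r) (hr : r < m) :
    (cexp m a r).degree = m + a := by
  rw [deg2, cexp_zero, cexp_one]
  unfold sexp
  rw [if_neg (by omega)]
  omega

lemma U_homog_le {m a r e : ℕ} (hr : r ≤ a) {v}
    (hv : v ∈ homogeneousSubmodule (Fin 2) ℚ e) :
    U m a r v ∈ homogeneousSubmodule (Fin 2) ℚ (m * e + a) := by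
  rw [mem_homogeneousSubmodule]
  have h1 : (monomial (cexp m a r) (1:ℚ)).IsHomogeneous a :=
    isHomogeneous_monomial _ (cexp_degree_le hr)
  have h2 : (frobP1 m v).IsHomogeneous (m * e) :=
    (mem_homogeneousSubmodule _ _).mp (frob_homog hv)
  have : U m a r v = monomial (cexp m a r) 1 * frobP1 m v := rfl
  rw [this, Nat.add_comm]
  exact h1.mul h2

lemma U_homog_gt {m a r e : ℕ} (ha : a < m) (hra : a < r) (hr : r < m) {v}
    (hv : v ∈ homogeneousSubmodule (Fin 2) ℚ e) :
    U m a r v ∈ homogeneousSubmodule (Fin 2) ℚ (m * (e + 1) + a) := by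
  rw [mem_homogeneousSubmodule]
  have h1 : (monomial (cexp m a r) (1:ℚ)).IsHomogeneous (m + a) :=
    isHomogeneous_monomial _ (cexp_degree_gt ha hra hr)
  have h2 : (frobP1 m v).IsHomogeneous (m * e) :=
    (mem_homogeneousSubmodule _ _).mp (frob_homog hv)
  have h3 : U m a r v = monomial (cexp m a r) 1 * frobP1 m v := rfl
  have h4 : m * (e + 1) + a = (m + a) + m * e := by ring
  rw [h3, h4]
  exact h1.mul h2

lemma sum_UD {m a e : ℕ} (hm : 0 < m) (ha : a < m) {v}
    (hv : v ∈ homogeneousSubmodule (Fin 2) ℚ (m * e + a)) :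
    (∑ i : Fin (a + 1), U m a i (D m i v)) +
      (∑ j : Fin (m - a - 1), U m a (a + 1 + j) (D m (a + 1 + j) v)) = v := by
  have hL : ∀ w, (∑ i : Fin (a + 1), U m a i (D m i w)) +
      (∑ j : Fin (m - a - 1), U m a (a + 1 + j) (D m (a + 1 + j) w)) =
      ((∑ i : Fin (a + 1), (U m a i).comp (D m i)) +
        (∑ j : Fin (m - a - 1), (U m a (a + 1 + j)).comp (D m (a + 1 + j)))) w := by
    intro w
    simp [LinearMap.sum_apply, LinearMap.add_apply, LinearMap.comp_apply]
  rw [hL]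
  refine homog_induction_eq (fun n hn => ?_) v hv
  simp only [LinearMap.add_apply, LinearMap.sum_apply, LinearMap.comp_apply]
  have hrm : n 0 % m < m := Nat.mod_lt _ hm
  have hkey := key m a hm ha hn
  have hrec : ∀ r : ℕ, n 0 % m = r →
      U m a r (monomial (mdiv m n) (1:ℚ)) = monomial n 1 := by
    intro r hr
    rw [U_monomial]
    have hex : cexp m a r + m • mdiv m n = n := by
      apply Finsupp.ext
      intro i
      have hd0 := Nat.div_add_mod (n 0) m
      have hd1 := Nat.div_add_mod (n 1) m
      fin_cases i
      · show (cexp m a r + m • mdiv m n) 0 = n 0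
        rw [Finsupp.add_apply, Finsupp.smul_apply, smul_eq_mul, cexp_zero, mdiv_apply, ← hr]
        omega
      · show (cexp m a r + m • mdiv m n) 1 = n 1
        rw [Finsupp.add_apply, Finsupp.smul_apply, smul_eq_mul, cexp_one, mdiv_apply,
          ← hr, ← hkey.1]
        omega
    rw [hex]
  rcases le_or_gt (n 0 % m) a with hle | hgt
  · rw [Finset.sum_eq_zero (f := fun j : Fin (m - a - 1) =>
      U m a (a + 1 + j) (D m (a + 1 + j) (monomial n 1))) ?_, add_zero]
    · rw [Fintype.sum_eq_single (⟨n 0 % m, by omega⟩ : Fin (a + 1)) ?_]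
      · rw [D_monomial, if_pos rfl]
        exact hrec _ rfl
      · intro x hx
        rw [D_monomial, if_neg, map_zero]
        intro hc
        exact hx (Fin.ext (by simpa using hc.symm))
    · intro j _
      rw [D_monomial, if_neg (by omega), map_zero]
  · rw [Finset.sum_eq_zero (f := fun i : Fin (a + 1) =>
      U m a i (D m i (monomial n 1))) ?_, zero_add]
    · rw [Fintype.sum_eq_single (⟨n 0 % m - a - 1, by omega⟩ : Fin (m - a - 1)) ?_]
      · have hval : n 0 % m = a + 1 + ((⟨n 0 % m - a - 1, by omega⟩ : Fin (m - a - 1)) : ℕ) := by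
          show n 0 % m = a + 1 + (n 0 % m - a - 1)
          omega
        rw [D_monomial, if_pos hval]
        exact hrec _ hval
      · intro x hx
        rw [D_monomial, if_neg, map_zero]
        intro hc
        apply hx
        apply Fin.ext
        show (x : ℕ) = n 0 % m - a - 1
        omega
    · intro i _
      rw [D_monomial, if_neg (by omega), map_zero]

lemma P1deg_neg {n : ℤ} (h : n < 0) : P1deg n = ⊥ := if_neg (not_le.mpr h)

lemma P1deg_nonneg {n : ℤ} (h : 0 ≤ n) :
    P1deg n = MvPolynomial.homogeneousSubmodule (Fin 2) ℚ n.toNat := if_pos h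

lemma toNat_eq (m a : ℕ) {d : ℤ} (hd : 0 ≤ d) :
    ((m : ℤ) * d + (a : ℤ)).toNat = m * d.toNat + a := by
  obtain ⟨e, rfl⟩ := Int.eq_ofNat_of_zero_le hd
  rw [show ((m : ℤ) * (e : ℤ) + (a : ℤ)) = ((m * e + a : ℕ) : ℤ) by push_cast; ring,
    Int.toNat_natCast, Int.toNat_natCast]

lemma arg_neg (m a : ℕ) (ha : a < m) {d : ℤ} (hd : d < 0) : (m : ℤ) * d + (a : ℤ) < 0 := by
  have h1 : (m : ℤ) * d ≤ (m : ℤ) * (-1) :=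
    mul_le_mul_of_nonneg_left (by omega) (by positivity)
  have h2 : (a:ℤ) < m := by exact_mod_cast ha
  omega

lemma P1deg_zero_of_neg {n : ℤ} (h : n < 0) {v} (hv : v ∈ P1deg n) : v = 0 := by
  rw [P1deg_neg h] at hv
  simpa using hv

lemma memD1 {m a : ℕ} (hm : 0 < m) (ha : a < m) (d : ℤ) {i : ℕ} (hi : i ≤ a) {v}
    (hv : v ∈ P1deg ((m : ℤ) * d + (a : ℤ))) : D m i v ∈ P1deg d := by
  by_cases hd : 0 ≤ d
  · rw [P1deg_nonneg hd]
    rw [P1deg_nonneg (by positivity), toNat_eq m a hd] at hv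
    exact D_homog_le hm ha hi hv
  · rw [P1deg_zero_of_neg (arg_neg m a ha (by omega)) hv, map_zero]
    exact zero_mem _

lemma memD2 {m a : ℕ} (hm : 0 < m) (ha : a < m) (d : ℤ) {r : ℕ} (hra : a < r) (hr : r < m) {v}
    (hv : v ∈ P1deg ((m : ℤ) * d + (a : ℤ))) : D m r v ∈ P1deg (d - 1) := by
  rcases lt_trichotomy d 0 with hd | hd | hd
  · rw [P1deg_zero_of_neg (arg_neg m a ha hd) hv, map_zero]
    exact zero_mem _
  · subst hd
    rw [P1deg_nonneg (by omega), toNat_eq m a le_rfl] at hv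
    simp only [Int.toNat_zero, Nat.mul_zero, Nat.zero_add] at hv
    rw [D_zero_gt hm ha hra hv]
    exact zero_mem _
  · rw [P1deg_nonneg (by omega)]
    have hnn : (0:ℤ) ≤ (m:ℤ) * d + a := by
      have := mul_nonneg (Int.natCast_nonneg m) (le_of_lt hd)
      omega
    rw [P1deg_nonneg hnn, toNat_eq m a (by omega)] at hv
    have he : d.toNat = (d - 1).toNat + 1 := by omega
    rw [he] at hv
    exact D_homog_gt hm ha hra hv

lemma memU1 {m a : ℕ} (hm : 0 < m) (ha : a < m) (d : ℤ) {i : ℕ} (hi : i ≤ a) {w}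
    (hw : w ∈ P1deg d) : U m a i w ∈ P1deg ((m : ℤ) * d + (a : ℤ)) := by
  by_cases hd : 0 ≤ d
  · rw [P1deg_nonneg (by positivity), toNat_eq m a hd]
    rw [P1deg_nonneg hd] at hw
    exact U_homog_le hi hw
  · rw [P1deg_zero_of_neg (by omega) hw, map_zero]
    exact zero_mem _

lemma memU2 {m a : ℕ} (hm : 0 < m) (ha : a < m) (d : ℤ) {r : ℕ} (hra : a < r) (hr : r < m) {w}
    (hw : w ∈ P1deg (d - 1)) : U m a r w ∈ P1deg ((m : ℤ) * d + (a : ℤ)) := by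
  by_cases hd : 1 ≤ d
  · rw [P1deg_nonneg (by positivity), toNat_eq m a (by omega)]
    rw [P1deg_nonneg (by omega)] at hw
    have he : d.toNat = (d - 1).toNat + 1 := by omega
    rw [he]
    exact U_homog_gt ha hra hr hw
  · rw [P1deg_zero_of_neg (by omega) hw, map_zero]
    exact zero_mem _

lemma DU_apply (m a : ℕ) {r r' : ℕ} (hm : 0 < m) (ha : a < m) (hr : r < m)
    (w : MvPolynomial (Fin 2) ℚ) :
    D m r' (U m a r w) = if r' = r then w else 0 := by
  have h := LinearMap.congr_fun (DU m a r r' hm ha hr) w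
  rw [LinearMap.comp_apply] at h
  rw [h]
  split_ifs <;> rfl

noncomputable def Fwd (m a : ℕ) (hm : 0 < m) (ha : a < m) (d : ℤ) :
    P1deg ((m : ℤ) * d + (a : ℤ)) →ₗ[ℚ]
      (Fin (a + 1) → P1deg d) × (Fin (m - a - 1) → P1deg (d - 1)) :=
  LinearMap.prod
    (LinearMap.pi fun i => LinearMap.codRestrict (P1deg d)
      ((D m i).comp (P1deg ((m : ℤ) * d + (a : ℤ))).subtype)
      (fun v => memD1 hm ha d (Nat.lt_succ_iff.mp i.isLt) v.2))
    (LinearMap.pi fun j => LinearMap.codRestrict (P1deg (d - 1))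
      ((D m (a + 1 + j)).comp (P1deg ((m : ℤ) * d + (a : ℤ))).subtype)
      (fun v => memD2 hm ha d (by omega) (by have := j.isLt; omega) v.2))

noncomputable def Bwd (m a : ℕ) (hm : 0 < m) (ha : a < m) (d : ℤ) :
    ((Fin (a + 1) → P1deg d) × (Fin (m - a - 1) → P1deg (d - 1))) →ₗ[ℚ]
      P1deg ((m : ℤ) * d + (a : ℤ)) :=
  (∑ i : Fin (a + 1),
    (LinearMap.codRestrict (P1deg ((m : ℤ) * d + (a : ℤ)))
        ((U m a i).comp (P1deg d).subtype)
        (fun w => memU1 hm ha d (Nat.lt_succ_iff.mp i.isLt) w.2)).comp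
      ((LinearMap.proj i).comp (LinearMap.fst ℚ _ _)))
  + (∑ j : Fin (m - a - 1),
    (LinearMap.codRestrict (P1deg ((m : ℤ) * d + (a : ℤ)))
        ((U m a (a + 1 + j)).comp (P1deg (d - 1)).subtype)
        (fun w => memU2 hm ha d (by omega) (by have := j.isLt; omega) w.2)).comp
      ((LinearMap.proj j).comp (LinearMap.snd ℚ _ _)))

lemma Fwd_fst (m a : ℕ) (hm : 0 < m) (ha : a < m) (d : ℤ)
    (v : P1deg ((m : ℤ) * d + (a : ℤ))) (i : Fin (a + 1)) :
    ((Fwd m a hm ha d v).1 i : MvPolynomial (Fin 2) ℚ) = D m i v := rfl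

lemma Fwd_snd (m a : ℕ) (hm : 0 < m) (ha : a < m) (d : ℤ)
    (v : P1deg ((m : ℤ) * d + (a : ℤ))) (j : Fin (m - a - 1)) :
    ((Fwd m a hm ha d v).2 j : MvPolynomial (Fin 2) ℚ) = D m (a + 1 + j) v := rfl

lemma Bwd_coe (m a : ℕ) (hm : 0 < m) (ha : a < m) (d : ℤ)
    (x : (Fin (a + 1) → P1deg d) × (Fin (m - a - 1) → P1deg (d - 1))) :
    ((Bwd m a hm ha d x : P1deg ((m : ℤ) * d + (a : ℤ))) : MvPolynomial (Fin 2) ℚ) =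
      (∑ i : Fin (a + 1), U m a i (x.1 i)) +
        (∑ j : Fin (m - a - 1), U m a (a + 1 + j) (x.2 j)) := by
  simp [Bwd, LinearMap.sum_apply, LinearMap.add_apply, LinearMap.comp_apply]

lemma sum_UD' {m a : ℕ} (hm : 0 < m) (ha : a < m) (d : ℤ) {v}
    (hv : v ∈ P1deg ((m : ℤ) * d + (a : ℤ))) :
    (∑ i : Fin (a + 1), U m a i (D m i v)) +
      (∑ j : Fin (m - a - 1), U m a (a + 1 + j) (D m (a + 1 + j) v)) = v := by
  by_cases hd : 0 ≤ d
  · rw [P1deg_nonneg (by positivity), toNat_eq m a hd] at hv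
    exact sum_UD hm ha hv
  · rw [P1deg_zero_of_neg (arg_neg m a ha (by omega)) hv]
    simp

noncomputable def E (m a : ℕ) (hm : 0 < m) (ha : a < m) (d : ℤ) :
    P1deg ((m : ℤ) * d + (a : ℤ)) ≃ₗ[ℚ]
      (Fin (a + 1) → P1deg d) × (Fin (m - a - 1) → P1deg (d - 1)) :=
  LinearEquiv.ofLinear (Fwd m a hm ha d) (Bwd m a hm ha d)
    (by
      apply LinearMap.ext
      intro x
      rw [LinearMap.comp_apply, LinearMap.id_apply]
      have hBc := Bwd_coe m a hm ha d x
      refine Prod.ext (funext fun i => Subtype.ext ?_) (funext fun j => Subtype.ext ?_)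
      · rw [Fwd_fst, hBc, map_add, map_sum, map_sum]
        rw [Fintype.sum_eq_single i (fun x' hx' => by
          rw [DU_apply m a hm ha (by have := x'.isLt; omega), if_neg
            (fun hc => hx' (Fin.ext hc.symm))])]
        rw [DU_apply m a hm ha (by have := i.isLt; omega), if_pos rfl,
          Finset.sum_eq_zero (fun j' _ => by
            rw [DU_apply m a hm ha (by have := j'.isLt; omega), if_neg
              (by have := i.isLt; omega)]), add_zero]
      · rw [Fwd_snd, hBc, map_add, map_sum, map_sum]
        rw [Finset.sum_eq_zero (fun i' _ => by
          rw [DU_apply m a hm ha (by have := i'.isLt; omega), if_neg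
            (by have := i'.isLt; omega)]), zero_add]
        rw [Fintype.sum_eq_single j (fun x' hx' => by
          rw [DU_apply m a hm ha (by have := x'.isLt; omega), if_neg
            (fun hc => hx' (Fin.ext (by omega)))])]
        rw [DU_apply m a hm ha (by have := j.isLt; omega), if_pos rfl])
    (by
      apply LinearMap.ext
      intro v
      rw [LinearMap.comp_apply, LinearMap.id_apply]
      apply Subtype.ext
      have hB := Bwd_coe m a hm ha d (Fwd m a hm ha d v)
      simp only [Fwd_fst, Fwd_snd] at hB
      rw [hB, sum_UD' hm ha d v.2])

end ThomsenP1

/-- Thomsen's toric Frobenius splitting on `P¹`: for the degree-`m` toric Frobenius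
morphism `m : P¹ → P¹` and `0 ≤ a < m`, one has
`m_* O(a) ≅ O^{⊕(a+1)} ⊕ O(−1)^{⊕(m−a−1)}`.  Via the Proj dictionary, the
pushforward `m_* O(a)` is the graded module `d ↦ H⁰(P¹, O(md+a))` over the
homogeneous coordinate ring of the target (acting through `frobP1 m`), and the
statement says it is isomorphic, as a graded module, to `(a+1)` copies of the
module of `O` and `(m−a−1)` copies of that of `O(−1)`: there are linear
isomorphisms in each degree, compatible with multiplication by homogeneous
elements. -/
theorem stmt_15 (m : ℕ) (hm : 0 < m) (a : ℕ) (ha : a < m) :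
    ∃ e : (d : ℤ) → P1deg ((m : ℤ) * d + (a : ℤ)) ≃ₗ[ℚ]
        (Fin (a + 1) → P1deg d) × (Fin (m - a - 1) → P1deg (d - 1)),
      ∀ (d : ℤ) (c : ℕ) (f : MvPolynomial (Fin 2) ℚ),
        f ∈ MvPolynomial.homogeneousSubmodule (Fin 2) ℚ c →
        ∀ (v : P1deg ((m : ℤ) * d + (a : ℤ)))
          (hfv : frobP1 m f * (v : MvPolynomial (Fin 2) ℚ) ∈
            P1deg ((m : ℤ) * (d + (c : ℤ)) + (a : ℤ)))
          (h1 : ∀ i : Fin (a + 1),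
            f * ((e d v).1 i : MvPolynomial (Fin 2) ℚ) ∈ P1deg (d + (c : ℤ)))
          (h2 : ∀ j : Fin (m - a - 1),
            f * ((e d v).2 j : MvPolynomial (Fin 2) ℚ) ∈ P1deg (d + (c : ℤ) - 1)),
          e (d + (c : ℤ)) ⟨frobP1 m f * (v : MvPolynomial (Fin 2) ℚ), hfv⟩ =
            (fun i => ⟨f * ((e d v).1 i : MvPolynomial (Fin 2) ℚ), h1 i⟩,
             fun j => ⟨f * ((e d v).2 j : MvPolynomial (Fin 2) ℚ), h2 j⟩) := by
  refine ⟨fun d => ThomsenP1.E m a hm ha d, ?_⟩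
  intro d c f _hf v hfv h1 h2
  refine Prod.ext (funext fun i => Subtype.ext ?_) (funext fun j => Subtype.ext ?_)
  · show ((ThomsenP1.E m a hm ha (d + (c:ℤ)) ⟨_, hfv⟩).1 i : MvPolynomial (Fin 2) ℚ) = _
    rw [ThomsenP1.E, LinearEquiv.ofLinear_apply, ThomsenP1.Fwd_fst]
    have hEv : ((ThomsenP1.E m a hm ha d v).1 i : MvPolynomial (Fin 2) ℚ) =
        ThomsenP1.D m i v := by
      rw [ThomsenP1.E, LinearEquiv.ofLinear_apply, ThomsenP1.Fwd_fst]
    show ThomsenP1.D m (i:ℕ) (frobP1 m f * (v : MvPolynomial (Fin 2) ℚ)) = _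
    rw [ThomsenP1.D_frob_mul m i hm, ← hEv]
  · show ((ThomsenP1.E m a hm ha (d + (c:ℤ)) ⟨_, hfv⟩).2 j : MvPolynomial (Fin 2) ℚ) = _
    rw [ThomsenP1.E, LinearEquiv.ofLinear_apply, ThomsenP1.Fwd_snd]
    have hEv : ((ThomsenP1.E m a hm ha d v).2 j : MvPolynomial (Fin 2) ℚ) =
        ThomsenP1.D m (a + 1 + j) v := by
      rw [ThomsenP1.E, LinearEquiv.ofLinear_apply, ThomsenP1.Fwd_snd]
    show ThomsenP1.D m (a + 1 + (j:ℕ)) (frobP1 m f * (v : MvPolynomial (Fin 2) ℚ)) = _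
    rw [ThomsenP1.D_frob_mul m (a + 1 + j) hm, ← hEv]
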